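/- arXiv:2301.05078 — 4 statements merged into one kernel-verified Lean document; each statement's English description precedes it below -/
import Mathlib

section
/- Let X be a spectral topological space and Y ⊆ X a constructible subset. Then the closure of Y equals the union of the closures of the points of Y, i.e. cl(Y) = ⋃_{y ∈ Y} cl({y}). -/
universe u

/-- A constructible subset of a topological space: a finite Boolean combination of
quasi-compact open subsets. -/
inductive IsConstructibleIn {X : Type u} [TopologicalSpace X] : Set X → Prop
  | basic {U : Set X} (hU : IsOpen U) (hU' : IsCompact U) : IsConstructibleIn U
  | compl {s : Set X} (hs : IsConstructibleIn s) : IsConstructibleIn sᶜ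
  | union {s t : Set X} (hs : IsConstructibleIn s) (ht : IsConstructibleIn t) :
      IsConstructibleIn (s ∪ t)

open Set PrimeSpectrum

namespace Stmt4Aux

variable {R : Type u} [CommRing R]

open Classical in
/-- The "patch" embedding of the prime spectrum into the Cantor cube `R → Bool`. -/
noncomputable def phi (p : PrimeSpectrum R) : R → Bool :=
  fun f => decide (f ∈ p.asIdeal)

lemma phi_eq_true_iff (p : PrimeSpectrum R) (f : R) : phi p f = true ↔ f ∈ p.asIdeal := by
  classical
  simp [phi]

lemma phi_eq_false_iff (p : PrimeSpectrum R) (f : R) : phi p f = false ↔ f ∉ p.asIdeal := by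
  rw [← phi_eq_true_iff p f]
  cases phi p f <;> simp

omit [CommRing R] in
lemma isClopen_eval (a : R) (b : Bool) : IsClopen {g : R → Bool | g a = b} := by
  have : {g : R → Bool | g a = b} = (fun g : R → Bool => g a) ⁻¹' {b} := rfl
  rw [this]
  exact (isClopen_discrete {b}).preimage (continuous_apply a)

/-- The range of `phi` is closed in the product topology. -/
lemma isClosed_range_phi : IsClosed (Set.range (phi (R := R))) := by
  have hrange : Set.range (phi (R := R)) =
      {g : R → Bool | g 0 = true} ∩ {g | g 1 = false} ∩
      (⋂ (a : R) (b : R), ({g : R → Bool | g a = true}ᶜ ∪ {g | g b = true}ᶜ ∪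
        {g | g (a + b) = true})) ∩
      (⋂ (a : R) (b : R), ({g : R → Bool | g b = true}ᶜ ∪ {g | g (a * b) = true})) ∩
      (⋂ (a : R) (b : R), ({g : R → Bool | g (a * b) = true}ᶜ ∪ {g | g a = true} ∪
        {g | g b = true})) := by
    ext g
    simp only [Set.mem_range, Set.mem_inter_iff, Set.mem_iInter, Set.mem_union, Set.mem_compl_iff,
      Set.mem_setOf_eq]
    constructor
    · rintro ⟨p, rfl⟩
      refine ⟨⟨⟨⟨?_, ?_⟩, ?_⟩, ?_⟩, ?_⟩
      · exact (phi_eq_true_iff p 0).mpr p.asIdeal.zero_mem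
      · exact (phi_eq_false_iff p 1).mpr fun h =>
          p.isPrime.ne_top ((Ideal.eq_top_iff_one _).mpr h)
      · intro a b
        simp only [phi_eq_true_iff]
        by_cases h1 : a ∈ p.asIdeal
        · by_cases h2 : b ∈ p.asIdeal
          · exact Or.inr (p.asIdeal.add_mem h1 h2)
          · exact Or.inl (Or.inr h2)
        · exact Or.inl (Or.inl h1)
      · intro a b
        simp only [phi_eq_true_iff]
        by_cases h2 : b ∈ p.asIdeal
        · exact Or.inr (p.asIdeal.mul_mem_left a h2)
        · exact Or.inl h2
      · intro a b
        simp only [phi_eq_true_iff]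
        by_cases h : a * b ∈ p.asIdeal
        · rcases p.isPrime.mem_or_mem h with h' | h'
          · exact Or.inl (Or.inr h')
          · exact Or.inr h'
        · exact Or.inl (Or.inl h)
    · rintro ⟨⟨⟨⟨h0, h1⟩, hadd⟩, hmul⟩, hprime⟩
      have hI : ∀ a b : R, g a = true → g b = true → g (a + b) = true := by
        intro a b ha hb
        rcases hadd a b with (h | h) | h
        · exact absurd ha h
        · exact absurd hb h
        · exact h
      have hS : ∀ a b : R, g b = true → g (a * b) = true := by
        intro a b hb
        rcases hmul a b with h | h
        · exact absurd hb h
        · exact h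
      let I : Ideal R :=
        { carrier := {a | g a = true}
          zero_mem' := h0
          add_mem' := fun {a b} ha hb => hI a b ha hb
          smul_mem' := fun a b hb => hS a b hb }
      have hIprime : I.IsPrime := by
        constructor
        · intro htop
          have : (1 : R) ∈ I := htop ▸ Submodule.mem_top
          have h1' : g 1 = true := this
          rw [h1] at h1'
          exact Bool.false_ne_true h1'
        · intro a b hab
          rcases hprime a b with (h | h) | h
          · exact absurd hab h
          · exact Or.inl h
          · exact Or.inr h
      refine ⟨⟨I, hIprime⟩, ?_⟩
      funext f
      by_cases hf : f ∈ I
      · rw [(phi_eq_true_iff ⟨I, hIprime⟩ f).mpr hf]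
        exact (show g f = true from hf).symm
      · rw [(phi_eq_false_iff ⟨I, hIprime⟩ f).mpr hf]
        have : ¬ g f = true := hf
        exact (Bool.not_eq_true (g f)).mp this |>.symm
  rw [hrange]
  refine ((((((isClopen_eval (R := R) 0 true).isClosed.inter
      (isClopen_eval (R := R) 1 false).isClosed).inter
    (isClosed_iInter fun a => isClosed_iInter fun b =>
      (((isClopen_eval (R := R) a true).compl.isClosed.union
        (isClopen_eval (R := R) b true).compl.isClosed).union
        (isClopen_eval (R := R) (a + b) true).isClosed))).inter
    (isClosed_iInter fun a => isClosed_iInter fun b =>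
      ((isClopen_eval (R := R) b true).compl.isClosed.union
        (isClopen_eval (R := R) (a * b) true).isClosed))).inter
    (isClosed_iInter fun a => isClosed_iInter fun b =>
      (((isClopen_eval (R := R) (a * b) true).compl.isClosed.union
        (isClopen_eval (R := R) a true).isClosed).union
        (isClopen_eval (R := R) b true).isClosed))))

/-- A set is "patch clopen" if it is the preimage under `phi` of a clopen set. -/
def IsPatchClopen (S : Set (PrimeSpectrum R)) : Prop :=
  ∃ C : Set (R → Bool), IsClopen C ∧ S = phi ⁻¹' C

lemma isPatchClopen_of_constructible {S : Set (PrimeSpectrum R)}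
    (hS : IsConstructibleIn S) : IsPatchClopen S := by
  induction hS with
  | @basic U hU hU' =>
    obtain ⟨t, ht⟩ := PrimeSpectrum.isCompact_isOpen_iff.mp ⟨hU', hU⟩
    refine ⟨(⋂ f ∈ t, {g : R → Bool | g f = true})ᶜ, ?_, ?_⟩
    · exact (isClopen_biInter_finset fun f _ => isClopen_eval f true).compl
    · rw [← ht]
      ext p
      simp [PrimeSpectrum.mem_zeroLocus, Set.subset_def, phi_eq_true_iff]
  | @compl s hs ih =>
    obtain ⟨C, hC, rfl⟩ := ih
    exact ⟨Cᶜ, hC.compl, rfl⟩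
  | @union s t hs ht ihs iht =>
    obtain ⟨C, hC, rfl⟩ := ihs
    obtain ⟨D, hD, rfl⟩ := iht
    exact ⟨C ∪ D, hC.union hD, rfl⟩

/-- Key lemma: in a prime spectrum, any point in the closure of a constructible set is a
specialization of a point of the set. -/
lemma exists_specializes_of_mem_closure {Y : Set (PrimeSpectrum R)}
    (hY : IsConstructibleIn Y) {x : PrimeSpectrum R} (hx : x ∈ closure Y) :
    ∃ y ∈ Y, x ∈ closure ({y} : Set (PrimeSpectrum R)) := by
  obtain ⟨C, hC, rfl⟩ := isPatchClopen_of_constructible hY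
  set ι := {f : R // f ∉ x.asIdeal}
  set s : Set (R → Bool) := C ∩ Set.range phi with hsdef
  have hscomp : IsCompact s :=
    (hC.isClosed.inter isClosed_range_phi).isCompact
  set t : ι → Set (R → Bool) := fun f => {g | g f.1 = false} with ht
  have htc : ∀ f : ι, IsClosed (t f) := fun f => (isClopen_eval f.1 false).isClosed
  have hst : ∀ u : Finset ι, (s ∩ ⋂ f ∈ u, t f).Nonempty := by
    intro u
    set f₀ : R := ∏ f ∈ u, f.1 with hf₀
    have hf₀x : f₀ ∉ x.asIdeal :=
      Submonoid.prod_mem x.asIdeal.primeCompl (fun f _ => f.2)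
    have hxU : x ∈ (basicOpen f₀ : Set (PrimeSpectrum R)) :=
      (PrimeSpectrum.mem_basicOpen f₀ x).mpr hf₀x
    obtain ⟨y, hyU, hyY⟩ := mem_closure_iff.mp hx _ (basicOpen f₀).isOpen hxU
    refine ⟨phi y, Set.mem_inter ⟨hyY, ⟨y, rfl⟩⟩ ?_⟩
    simp only [Set.mem_iInter]
    intro f hfu
    have hdvd : f.1 ∣ f₀ := Finset.dvd_prod_of_mem _ hfu
    have hf₀y : f₀ ∉ y.asIdeal := (PrimeSpectrum.mem_basicOpen f₀ y).mp hyU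
    have hfy : f.1 ∉ y.asIdeal := fun h => hf₀y (Ideal.mem_of_dvd _ hdvd h)
    exact (phi_eq_false_iff y f.1).mpr hfy
  obtain ⟨g, hgs, hg⟩ := hscomp.inter_iInter_nonempty t htc hst
  simp only [Set.mem_iInter] at hg
  obtain ⟨y, rfl⟩ := hgs.2
  refine ⟨y, hgs.1, ?_⟩
  rw [← PrimeSpectrum.le_iff_mem_closure]
  intro f hf
  by_contra hfx
  have hfy : phi y f = false := hg ⟨f, hfx⟩
  rw [phi_eq_false_iff] at hfy
  exact hfy hf

lemma closure_eq_biUnion {Y : Set (PrimeSpectrum R)} (hY : IsConstructibleIn Y) :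
    closure Y = ⋃ y ∈ Y, closure {y} := by
  apply Set.Subset.antisymm
  · intro x hx
    obtain ⟨y, hy, hxy⟩ := exists_specializes_of_mem_closure hY hx
    exact Set.mem_biUnion hy hxy
  · exact Set.iUnion₂_subset fun y hy => closure_mono (Set.singleton_subset_iff.mpr hy)

end Stmt4Aux

/-- Constructibility transfers along homeomorphisms (preimage form). -/
lemma IsConstructibleIn.preimage_homeomorph {X Z : Type u} [TopologicalSpace X]
    [TopologicalSpace Z] (e : Z ≃ₜ X) {s : Set X} (hs : IsConstructibleIn s) :
    IsConstructibleIn (e ⁻¹' s) := by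
  induction hs with
  | @basic U hU hU' =>
    exact IsConstructibleIn.basic (hU.preimage e.continuous) (e.isCompact_preimage.mpr hU')
  | @compl s hs ih =>
    rw [Set.preimage_compl]
    exact IsConstructibleIn.compl ih
  | @union s t hs ht ihs iht =>
    rw [Set.preimage_union]
    exact IsConstructibleIn.union ihs iht

lemma mem_closure_iff_homeo {X Z : Type u} [TopologicalSpace X] [TopologicalSpace Z]
    (e : X ≃ₜ Z) (s : Set X) (x : X) : x ∈ closure s ↔ e x ∈ closure (⇑e '' s) := by
  rw [← e.image_closure]
  exact ⟨fun h => Set.mem_image_of_mem _ h, fun ⟨z, hz, hez⟩ => e.injective hez ▸ hz⟩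

/-- In a spectral space (a space homeomorphic to the prime spectrum of a commutative
ring), the closure of a constructible subset is the union of the closures of its
points. -/
theorem stmt4 {X : Type u} [TopologicalSpace X]
    (hX : ∃ (R : Type u) (_ : CommRing R), Nonempty (X ≃ₜ PrimeSpectrum R))
    (Y : Set X) (hY : IsConstructibleIn Y) :
    closure Y = ⋃ y ∈ Y, closure {y} := by
  obtain ⟨R, _, ⟨e⟩⟩ := hX
  have himg : ∀ s : Set X, ⇑e.symm ⁻¹' s = ⇑e '' s := fun s => by
    ext z
    exact ⟨fun h => ⟨e.symm z, h, e.apply_symm_apply z⟩,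
      by rintro ⟨w, hw, rfl⟩; simpa⟩
  set Y' : Set (PrimeSpectrum R) := ⇑e '' Y with hY'
  have hY'c : IsConstructibleIn Y' := by
    rw [hY', ← himg]
    exact hY.preimage_homeomorph e.symm
  have key := Stmt4Aux.closure_eq_biUnion hY'c
  ext x
  rw [mem_closure_iff_homeo e Y x, ← hY', key]
  simp only [Set.mem_iUnion, exists_prop]
  constructor
  · rintro ⟨y', hy', hx⟩
    obtain ⟨y, hy, rfl⟩ := (hY' ▸ hy' : y' ∈ ⇑e '' Y)
    refine ⟨y, hy, ?_⟩
    rw [mem_closure_iff_homeo e _ x, Set.image_singleton]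
    exact hx
  · rintro ⟨y, hy, hx⟩
    refine ⟨e y, ⟨y, hy, rfl⟩, ?_⟩
    rw [mem_closure_iff_homeo e _ x, Set.image_singleton] at hx
    exact hx
end

section
/- Let k be a field and let Λ'' ⊆ Λ' ⊆ Λ be k[[u]]-lattices in k((u))² (finitely generated submodules spanning k((u))² over k((u))) with dim_k(Λ/Λ') = dim_k(Λ'/Λ'') = 1 and u·Λ ⊆ Λ''. Then Λ = u⁻¹Λ'' := {x ∈ k((u))² : u·x ∈ Λ''}. Consequently, if Λ'' has Hodge invariant (a, b) with respect to a lattice Λ₀ containing Λ (with a, b ≥ 1), then Λ has Hodge invariant (a − 1, b − 1). -/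
set_option maxHeartbeats 1000000
set_option synthInstance.maxHeartbeats 1000000

open PowerSeries

section Stmt8Aux

variable {k : Type*} [Field k]

private theorem stmt8_smul0 {c : PowerSeries k}
    {x : Fin 2 → LaurentSeries k} (h : c • x = 0) (hc : c ≠ 0) : x = 0 := by
  funext i
  have hi := congrFun h i
  simp only [Pi.smul_apply, Pi.zero_apply] at hi
  rw [Algebra.smul_def] at hi
  rcases mul_eq_zero.mp hi with h' | h'
  · exact absurd h' ((map_ne_zero_iff _
      (IsFractionRing.injective (PowerSeries k) (LaurentSeries k))).mpr hc)
  · exact h'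

private theorem stmt8_sadd (c : PowerSeries k) (x y : Fin 2 → LaurentSeries k) :
    c • (x + y) = c • x + c • y := smul_add c x y

private theorem stmt8_smm (c d : PowerSeries k) (x : Fin 2 → LaurentSeries k) :
    c • d • x = (c * d) • x := smul_smul c d x

private theorem stmt8_Xinj {x y : Fin 2 → LaurentSeries k}
    (h : (X : PowerSeries k) • x = (X : PowerSeries k) • y) : x = y := by
  funext i
  have hi := congrFun h i
  simp only [Pi.smul_apply] at hi
  rw [Algebra.smul_def, Algebra.smul_def] at hi
  exact mul_left_cancel₀ ((map_ne_zero_iff _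
    (IsFractionRing.injective (PowerSeries k) (LaurentSeries k))).mpr X_ne_zero) hi

/-- In `(ι → k⟦X⟧)` with `card ι ≤ 2` there is no strict chain of length 3
above a submodule containing `X • ⊤`. -/
private theorem stmt8_no_chain {ι : Type*} [Fintype ι] (hcard : Fintype.card ι ≤ 2)
    (P0 P1 P2 P3 : Submodule (PowerSeries k) (ι → PowerSeries k))
    (h01 : P0 < P1) (h12 : P1 < P2) (h23 : P2 < P3)
    (hX : ∀ m : ι → PowerSeries k, (X : PowerSeries k) • m ∈ P0) : False := by
  classical
  set R := PowerSeries k with hRdef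
  set M := (ι → PowerSeries k) with hMdef
  set XT : Submodule R M :=
    Submodule.map ((X : R) • (LinearMap.id : M →ₗ[R] M)) ⊤ with hXTdef
  have hXTmem : ∀ m : M, (X : R) • m ∈ XT := fun m =>
    ⟨m, trivial, rfl⟩
  have hXQ : ∀ q : M ⧸ XT, (X : R) • q = 0 := by
    intro q
    obtain ⟨m, rfl⟩ := XT.mkQ_surjective q
    rw [← map_smul, Submodule.mkQ_apply]
    exact (Submodule.Quotient.mk_eq_zero _).mpr (hXTmem m)
  have hred : ∀ (f : R) (q : M ⧸ XT), f • q = (PowerSeries.constantCoeff f) • q := by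
    intro f q
    have h1 : ((PowerSeries.constantCoeff f) : k) • q
        = (PowerSeries.C (PowerSeries.constantCoeff f)) • q := by
      rw [← algebraMap_smul R ((PowerSeries.constantCoeff f) : k) q]
      congr 1
    obtain ⟨g, hg⟩ : (X : R) ∣ (f - PowerSeries.C (PowerSeries.constantCoeff f)) := by
      rw [PowerSeries.X_dvd_iff]
      simp
    have hf : f = PowerSeries.C (PowerSeries.constantCoeff f) + X * g := by
      rw [← hg]; ring
    calc f • q = (PowerSeries.C (PowerSeries.constantCoeff f) + X * g) • q := by rw [← hf]
      _ = (PowerSeries.C (PowerSeries.constantCoeff f)) • q + (X : R) • (g • q) := by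
          rw [add_smul, mul_smul]
      _ = ((PowerSeries.constantCoeff f) : k) • q := by rw [hXQ, add_zero, ← h1]
  set v : ι → M ⧸ XT := fun i => XT.mkQ (Pi.single i 1) with hvdef
  have hspan : Submodule.span k (Set.range v) = ⊤ := by
    rw [eq_top_iff]
    rintro q -
    obtain ⟨m, rfl⟩ := XT.mkQ_surjective q
    have hm : m = ∑ i, Pi.single i (m i) := (Finset.univ_sum_single m).symm
    rw [hm, map_sum]
    refine Submodule.sum_mem _ fun i _ => ?_
    have hsingle : (Pi.single i (m i) : M) = (m i) • (Pi.single i (1 : R) : M) := by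
      funext j
      simp only [Pi.single_apply, Pi.smul_apply, smul_eq_mul]
      split <;> simp
    rw [hsingle, map_smul, hred]
    exact Submodule.smul_mem _ _ (Submodule.subset_span ⟨i, rfl⟩)
  haveI : Module.Finite k (M ⧸ XT) :=
    ⟨by rw [← hspan]; exact Submodule.fg_span (Set.finite_range v)⟩
  have hdim : Module.finrank k (M ⧸ XT) ≤ 2 := by
    have h1 : Module.finrank k (M ⧸ XT)
        = Module.finrank k (⊤ : Submodule k (M ⧸ XT)) := (finrank_top k _).symm
    rw [h1, ← hspan]
    exact le_trans (finrank_range_le_card v) hcard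
  set G : Submodule R M → Submodule k (M ⧸ XT) := fun P =>
    (Submodule.map XT.mkQ P).restrictScalars k with hGdef
  have hGlt : ∀ P P' : Submodule R M, XT ≤ P → P < P' → G P < G P' := by
    intro P P' hle hlt
    have hmono : G P ≤ G P' := by
      intro x hx
      obtain ⟨y, hy, rfl⟩ := hx
      exact ⟨y, hlt.le hy, rfl⟩
    refine lt_of_le_of_ne hmono fun heq => ?_
    have heq2 : Submodule.map XT.mkQ P = Submodule.map XT.mkQ P' :=
      Submodule.restrictScalars_injective k _ _ heq
    have h2 : XT ⊔ P = XT ⊔ P' := by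
      rw [← Submodule.comap_map_mkQ, ← Submodule.comap_map_mkQ, heq2]
    rw [sup_eq_right.mpr hle, sup_eq_right.mpr (hle.trans hlt.le)] at h2
    exact hlt.ne h2
  have hXTP0 : XT ≤ P0 := by
    rintro x ⟨m, -, rfl⟩
    exact hX m
  have l1 : G P0 < G P1 := hGlt _ _ hXTP0 h01
  have l2 : G P1 < G P2 := hGlt _ _ (hXTP0.trans h01.le) h12
  have l3 : G P2 < G P3 := hGlt _ _ ((hXTP0.trans h01.le).trans h12.le) h23
  have f1 : Module.finrank k (G P0) < Module.finrank k (G P1) :=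
    Submodule.finrank_lt_finrank_of_lt l1
  have f2 : Module.finrank k (G P1) < Module.finrank k (G P2) :=
    Submodule.finrank_lt_finrank_of_lt l2
  have f3 : Module.finrank k (G P2) < Module.finrank k (G P3) :=
    Submodule.finrank_lt_finrank_of_lt l3
  have fle : Module.finrank k (G P3) ≤ Module.finrank k (M ⧸ XT) :=
    Submodule.finrank_le _
  omega

private theorem stmt8_key (Λ'' Λ' Λ N' : Submodule (PowerSeries k) (Fin 2 → LaurentSeries k))
    (hFG : Λ''.FG)
    (c1 : Λ'' < Λ') (c2 : Λ' < Λ) (c3 : Λ < N')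
    (hN : ∀ x ∈ N', (X : PowerSeries k) • x ∈ Λ'') : False := by
  classical
  set R := PowerSeries k with hRdef
  set V := (Fin 2 → LaurentSeries k) with hVdef
  letI : SMul R Λ'' :=
    (inferInstance : Module R Λ'').toDistribMulAction.toMulAction.toSMul
  haveI hnzs : NoZeroSMulDivisors R Λ'' := by
    constructor
    intro c y h
    by_cases hc : c = 0
    · exact Or.inl hc
    · refine Or.inr (Subtype.ext (stmt8_smul0 ?_ hc))
      rw [← Submodule.coe_smul, h, Submodule.coe_zero]
  haveI hfin : Module.Finite R Λ'' := Module.Finite.iff_fg.mpr hFG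
  obtain ⟨n, b⟩ := Module.basisOfFiniteTypeTorsionFree' (R := R) (M := Λ'')
  have hb : LinearIndependent R (fun i => ((b i : Λ'') : V)) :=
    b.linearIndependent.map' Λ''.subtype (Submodule.ker_subtype _)
  have hbK : LinearIndependent (LaurentSeries k) (fun i => ((b i : Λ'') : V)) :=
    (LinearIndependent.iff_fractionRing R (LaurentSeries k)).mp hb
  have hcard : Fintype.card (Fin n) ≤ 2 := by
    have h2 := hbK.fintype_card_le_finrank
    simpa [Module.finrank_fin_fun] using h2
  set e := b.equivFun with hedef
  set φ : V →ₗ[R] V := (X : R) • LinearMap.id with hφdef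
  set P : Submodule R V → Submodule R (Fin n → R) := fun W =>
    Submodule.map e.toLinearMap (Submodule.comap Λ''.subtype (Submodule.map φ W)) with hPdef
  have hXinj : ∀ {x y : V}, (X : R) • x = (X : R) • y → x = y := fun h => stmt8_Xinj h
  have hmemP : ∀ (W : Submodule R V) (z : V) (_ : z ∈ W) (hz' : (X : R) • z ∈ Λ''),
      e ⟨(X : R) • z, hz'⟩ ∈ P W := by
    intro W z hz hz'
    exact ⟨⟨(X : R) • z, hz'⟩, ⟨z, hz, rfl⟩, rfl⟩
  have hPlt : ∀ W W' : Submodule R V, W < W' → (∀ x ∈ W', (X : R) • x ∈ Λ'') →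
      P W < P W' := by
    intro W W' hlt hW'
    have hle : P W ≤ P W' :=
      Submodule.map_mono (Submodule.comap_mono (Submodule.map_mono hlt.le))
    obtain ⟨z, hz2, hz1⟩ := SetLike.exists_of_lt hlt
    refine lt_of_le_of_ne hle fun heq => hz1 ?_
    have hq : e ⟨(X : R) • z, hW' z hz2⟩ ∈ P W := heq ▸ hmemP W' z hz2 _
    obtain ⟨y, hy, hey⟩ := hq
    have hyy : y = ⟨(X : R) • z, hW' z hz2⟩ := e.injective hey
    rw [hyy] at hy
    obtain ⟨w, hw, hww⟩ := hy
    have hww' : (X : R) • w = (X : R) • z := hww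
    have hwz : w = z := hXinj hww'
    exact hwz ▸ hw
  have hchain0 : ∀ m : Fin n → R, (X : R) • m ∈ P Λ'' := by
    intro m
    have h1 : (X : R) • ((e.symm m : Λ'') : V) ∈ Λ'' := Λ''.smul_mem _ (e.symm m).2
    have h2 := hmemP Λ'' ((e.symm m : Λ'') : V) (e.symm m).2 h1
    have h3 : (⟨(X : R) • ((e.symm m : Λ'') : V), h1⟩ : Λ'') = (X : R) • (e.symm m) := rfl
    rw [h3, map_smul, e.apply_symm_apply] at h2
    exact h2
  exact stmt8_no_chain hcard (P Λ'') (P Λ') (P Λ) (P N')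
    (hPlt _ _ c1 fun x hx => hN x ((c2.le.trans c3.le) hx))
    (hPlt _ _ c2 fun x hx => hN x (c3.le hx))
    (hPlt _ _ c3 hN) hchain0

end Stmt8Aux

/-- Let `Λ'' ⊆ Λ' ⊆ Λ` be `k[[u]]`-lattices in `k((u))²` with both quotients of
`k`-dimension 1 (equivalently: each inclusion is a covering in the lattice of
`k[[u]]`-submodules) and `u·Λ ⊆ Λ''`.  Then `Λ = u⁻¹ Λ''`; consequently if `Λ''` has
Hodge invariant `(a, b)` (with `a ≥ b ≥ 1`) with respect to a lattice `Λ₀ ⊇ Λ`, then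
`Λ` has Hodge invariant `(a - 1, b - 1)`. -/
theorem stmt8 {k : Type*} [Field k]
    (Λ'' Λ' Λ : Submodule (PowerSeries k) (Fin 2 → LaurentSeries k))
    (hlat : ∀ W ∈ [Λ'', Λ', Λ], W.FG ∧
      Submodule.span (LaurentSeries k) (W : Set (Fin 2 → LaurentSeries k)) = ⊤)
    (h1 : Λ'' ⋖ Λ') (h2 : Λ' ⋖ Λ)
    (hu : ∀ x ∈ Λ, (PowerSeries.X : PowerSeries k) • x ∈ Λ'') :
    (Λ : Set (Fin 2 → LaurentSeries k)) =
      {x | (PowerSeries.X : PowerSeries k) • x ∈ Λ''} ∧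
    ∀ (Λ₀ : Submodule (PowerSeries k) (Fin 2 → LaurentSeries k)),
      Λ₀.FG → Submodule.span (LaurentSeries k) (Λ₀ : Set (Fin 2 → LaurentSeries k)) = ⊤ →
      Λ ≤ Λ₀ →
      ∀ a b : ℕ, 1 ≤ b → b ≤ a →
        (∃ B : Module.Basis (Fin 2) (PowerSeries k) Λ₀,
          Λ'' = Submodule.span (PowerSeries k)
            {(PowerSeries.X ^ a : PowerSeries k) • (B 0 : Fin 2 → LaurentSeries k),
             (PowerSeries.X ^ b : PowerSeries k) • (B 1 : Fin 2 → LaurentSeries k)}) →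
        ∃ B : Module.Basis (Fin 2) (PowerSeries k) Λ₀,
          Λ = Submodule.span (PowerSeries k)
            {(PowerSeries.X ^ (a - 1) : PowerSeries k) • (B 0 : Fin 2 → LaurentSeries k),
             (PowerSeries.X ^ (b - 1) : PowerSeries k) • (B 1 : Fin 2 → LaurentSeries k)} := by
  classical
  have hXinj : ∀ {x y : Fin 2 → LaurentSeries k},
      (PowerSeries.X : PowerSeries k) • x = (PowerSeries.X : PowerSeries k) • y → x = y :=
    fun h => stmt8_Xinj h
  have part1 : (Λ : Set (Fin 2 → LaurentSeries k)) =
      {x | (PowerSeries.X : PowerSeries k) • x ∈ Λ''} := by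
    ext x
    simp only [Set.mem_setOf_eq, SetLike.mem_coe]
    constructor
    · exact hu x
    · intro hx
      by_contra hxΛ
      have hFG := (hlat Λ'' (by simp)).1
      refine stmt8_key Λ'' Λ' Λ (Λ ⊔ Submodule.span (PowerSeries k) {x}) hFG h1.lt h2.lt ?_ ?_
      · refine lt_of_le_of_ne le_sup_left fun heq => hxΛ ?_
        rw [heq]
        exact Submodule.mem_sup_right (Submodule.mem_span_singleton_self x)
      · intro z hz
        obtain ⟨y, hy, w, hw, rfl⟩ := Submodule.mem_sup.mp hz
        obtain ⟨c, rfl⟩ := Submodule.mem_span_singleton.mp hw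
        have hcomm : (PowerSeries.X : PowerSeries k) • (c • x)
            = c • ((PowerSeries.X : PowerSeries k) • x) :=
          calc (PowerSeries.X : PowerSeries k) • (c • x)
              = ((PowerSeries.X : PowerSeries k) * c) • x := stmt8_smm _ _ _
            _ = (c * (PowerSeries.X : PowerSeries k)) • x := by rw [mul_comm]
            _ = c • ((PowerSeries.X : PowerSeries k) • x) := (stmt8_smm _ _ _).symm
        have hexp : (PowerSeries.X : PowerSeries k) • (y + c • x)
            = (PowerSeries.X : PowerSeries k) • y
              + c • ((PowerSeries.X : PowerSeries k) • x) :=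
          calc (PowerSeries.X : PowerSeries k) • (y + c • x)
              = (PowerSeries.X : PowerSeries k) • y
                + (PowerSeries.X : PowerSeries k) • (c • x) := stmt8_sadd _ _ _
            _ = (PowerSeries.X : PowerSeries k) • y
                + c • ((PowerSeries.X : PowerSeries k) • x) := by rw [hcomm]
        rw [hexp]
        exact Submodule.add_mem _ (hu y hy) (Submodule.smul_mem _ c hx)
  refine ⟨part1, ?_⟩
  rintro Λ₀ - - - a b hb hba ⟨B, hB⟩
  refine ⟨B, ?_⟩
  have hmem : ∀ x : Fin 2 → LaurentSeries k,
      x ∈ Λ ↔ (PowerSeries.X : PowerSeries k) • x ∈ Λ'' := by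
    intro x
    rw [← SetLike.mem_coe, part1]
    rfl
  have ha1 : a - 1 + 1 = a := Nat.sub_add_cancel (hb.trans hba)
  have hb1 : b - 1 + 1 = b := Nat.sub_add_cancel hb
  have key0 : (PowerSeries.X : PowerSeries k) • ((PowerSeries.X : PowerSeries k) ^ (a - 1) •
        (B 0 : Fin 2 → LaurentSeries k))
      = (PowerSeries.X : PowerSeries k) ^ a • (B 0 : Fin 2 → LaurentSeries k) :=
    calc (PowerSeries.X : PowerSeries k) • ((PowerSeries.X : PowerSeries k) ^ (a - 1) •
          (B 0 : Fin 2 → LaurentSeries k))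
        = ((PowerSeries.X : PowerSeries k) * (PowerSeries.X : PowerSeries k) ^ (a - 1)) •
          (B 0 : Fin 2 → LaurentSeries k) := stmt8_smm _ _ _
      _ = (PowerSeries.X : PowerSeries k) ^ a • (B 0 : Fin 2 → LaurentSeries k) := by
          rw [← pow_succ', ha1]
  have key1 : (PowerSeries.X : PowerSeries k) • ((PowerSeries.X : PowerSeries k) ^ (b - 1) •
        (B 1 : Fin 2 → LaurentSeries k))
      = (PowerSeries.X : PowerSeries k) ^ b • (B 1 : Fin 2 → LaurentSeries k) :=
    calc (PowerSeries.X : PowerSeries k) • ((PowerSeries.X : PowerSeries k) ^ (b - 1) •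
          (B 1 : Fin 2 → LaurentSeries k))
        = ((PowerSeries.X : PowerSeries k) * (PowerSeries.X : PowerSeries k) ^ (b - 1)) •
          (B 1 : Fin 2 → LaurentSeries k) := stmt8_smm _ _ _
      _ = (PowerSeries.X : PowerSeries k) ^ b • (B 1 : Fin 2 → LaurentSeries k) := by
          rw [← pow_succ', hb1]
  have hexp : ∀ f g : PowerSeries k,
      (PowerSeries.X : PowerSeries k) •
        (f • ((PowerSeries.X : PowerSeries k) ^ (a - 1) • (B 0 : Fin 2 → LaurentSeries k))
          + g • ((PowerSeries.X : PowerSeries k) ^ (b - 1) • (B 1 : Fin 2 → LaurentSeries k)))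
      = f • ((PowerSeries.X : PowerSeries k) ^ a • (B 0 : Fin 2 → LaurentSeries k))
        + g • ((PowerSeries.X : PowerSeries k) ^ b • (B 1 : Fin 2 → LaurentSeries k)) := by
    intro f g
    have e1 : (PowerSeries.X : PowerSeries k) •
        (f • ((PowerSeries.X : PowerSeries k) ^ (a - 1) • (B 0 : Fin 2 → LaurentSeries k)))
        = f • ((PowerSeries.X : PowerSeries k) ^ a • (B 0 : Fin 2 → LaurentSeries k)) :=
      calc (PowerSeries.X : PowerSeries k) •
          (f • ((PowerSeries.X : PowerSeries k) ^ (a - 1) • (B 0 : Fin 2 → LaurentSeries k)))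
          = ((PowerSeries.X : PowerSeries k) * f) •
            ((PowerSeries.X : PowerSeries k) ^ (a - 1) • (B 0 : Fin 2 → LaurentSeries k)) :=
            stmt8_smm _ _ _
        _ = (f * (PowerSeries.X : PowerSeries k)) •
            ((PowerSeries.X : PowerSeries k) ^ (a - 1) • (B 0 : Fin 2 → LaurentSeries k)) := by
            rw [mul_comm]
        _ = f • ((PowerSeries.X : PowerSeries k) •
            ((PowerSeries.X : PowerSeries k) ^ (a - 1) • (B 0 : Fin 2 → LaurentSeries k))) :=
            (stmt8_smm _ _ _).symm
        _ = f • ((PowerSeries.X : PowerSeries k) ^ a • (B 0 : Fin 2 → LaurentSeries k)) :=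
            congrArg (fun t => f • t) key0
    have e2 : (PowerSeries.X : PowerSeries k) •
        (g • ((PowerSeries.X : PowerSeries k) ^ (b - 1) • (B 1 : Fin 2 → LaurentSeries k)))
        = g • ((PowerSeries.X : PowerSeries k) ^ b • (B 1 : Fin 2 → LaurentSeries k)) :=
      calc (PowerSeries.X : PowerSeries k) •
          (g • ((PowerSeries.X : PowerSeries k) ^ (b - 1) • (B 1 : Fin 2 → LaurentSeries k)))
          = ((PowerSeries.X : PowerSeries k) * g) •
            ((PowerSeries.X : PowerSeries k) ^ (b - 1) • (B 1 : Fin 2 → LaurentSeries k)) :=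
            stmt8_smm _ _ _
        _ = (g * (PowerSeries.X : PowerSeries k)) •
            ((PowerSeries.X : PowerSeries k) ^ (b - 1) • (B 1 : Fin 2 → LaurentSeries k)) := by
            rw [mul_comm]
        _ = g • ((PowerSeries.X : PowerSeries k) •
            ((PowerSeries.X : PowerSeries k) ^ (b - 1) • (B 1 : Fin 2 → LaurentSeries k))) :=
            (stmt8_smm _ _ _).symm
        _ = g • ((PowerSeries.X : PowerSeries k) ^ b • (B 1 : Fin 2 → LaurentSeries k)) :=
            congrArg (fun t => g • t) key1
    calc (PowerSeries.X : PowerSeries k) •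
        (f • ((PowerSeries.X : PowerSeries k) ^ (a - 1) • (B 0 : Fin 2 → LaurentSeries k))
          + g • ((PowerSeries.X : PowerSeries k) ^ (b - 1) • (B 1 : Fin 2 → LaurentSeries k)))
        = (PowerSeries.X : PowerSeries k) •
            (f • ((PowerSeries.X : PowerSeries k) ^ (a - 1) • (B 0 : Fin 2 → LaurentSeries k)))
          + (PowerSeries.X : PowerSeries k) •
            (g • ((PowerSeries.X : PowerSeries k) ^ (b - 1) • (B 1 : Fin 2 → LaurentSeries k))) :=
          stmt8_sadd _ _ _
      _ = f • ((PowerSeries.X : PowerSeries k) ^ a • (B 0 : Fin 2 → LaurentSeries k))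
          + g • ((PowerSeries.X : PowerSeries k) ^ b • (B 1 : Fin 2 → LaurentSeries k)) := by
          rw [e1, e2]
  ext x
  rw [hmem, hB]
  constructor
  · intro hx
    obtain ⟨f, g, hfg⟩ := Submodule.mem_span_pair.mp hx
    have hxx : (PowerSeries.X : PowerSeries k) • x = (PowerSeries.X : PowerSeries k) •
        (f • ((PowerSeries.X : PowerSeries k) ^ (a - 1) • (B 0 : Fin 2 → LaurentSeries k))
          + g • ((PowerSeries.X : PowerSeries k) ^ (b - 1) • (B 1 : Fin 2 → LaurentSeries k))) := by
      rw [hexp, hfg]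
    have hx2 := hXinj hxx
    rw [hx2]
    exact Submodule.add_mem _
      (Submodule.smul_mem _ f (Submodule.subset_span (Set.mem_insert _ _)))
      (Submodule.smul_mem _ g (Submodule.subset_span (Set.mem_insert_of_mem _ rfl)))
  · intro hx
    obtain ⟨f, g, hfg⟩ := Submodule.mem_span_pair.mp hx
    rw [← hfg, hexp]
    exact Submodule.add_mem _
      (Submodule.smul_mem _ f (Submodule.subset_span (Set.mem_insert _ _)))
      (Submodule.smul_mem _ g (Submodule.subset_span (Set.mem_insert_of_mem _ rfl)))
end

section
/- Let k be a field, e ≥ 1, and let ℰ be a free module of rank 2 over k[u]/(u^e). Suppose 0 = ω^{(0)} ⊆ ω^{(1)} ⊆ ⋯ ⊆ ω^{(e)} is a chain of k[u]/(u^e)-submodules of ℰ with dim_k(ω^{(j)}/ω^{(j−1)}) = 1 and u·ω^{(j)} ⊆ ω^{(j−1)} for all 1 ≤ j ≤ e. Then the following are equivalent: (1) for every 2 ≤ j ≤ e the map induced by multiplication by u from ω^{(j)}/ω^{(j−1)} to ω^{(j−1)}/ω^{(j−2)} is nonzero; (2) ω^{(e)} is a free k[u]/(u^e)-module of rank 1.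 -/
/-- The truncated polynomial ring `k[u]/(u^e)`. -/
noncomputable abbrev TruncPoly (k : Type*) [Field k] (e : ℕ) : Type _ :=
  Polynomial k ⧸ Ideal.span {(Polynomial.X : Polynomial k) ^ e}

/-- The class of `u` in `k[u]/(u^e)`. -/
noncomputable abbrev truncU (k : Type*) [Field k] (e : ℕ) : TruncPoly k e :=
  Ideal.Quotient.mk _ Polynomial.X

open Polynomial in
lemma truncU_pow_eq_zero {k : Type*} [Field k] (e : ℕ) : (truncU k e) ^ e = 0 := by
  rw [← map_pow, Ideal.Quotient.eq_zero_iff_mem]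
  exact Ideal.subset_span rfl

open Polynomial in
lemma truncU_pow_ne_zero {k : Type*} [Field k] (e : ℕ) {i : ℕ} (hi : i < e) :
    (truncU k e) ^ i ≠ 0 := by
  rw [← map_pow, Ne, Ideal.Quotient.eq_zero_iff_mem, Ideal.mem_span_singleton]
  intro h
  have h2 : (X : k[X]) ^ i ≠ 0 := pow_ne_zero _ X_ne_zero
  have h3 := Polynomial.natDegree_le_of_dvd h h2
  simp only [natDegree_X_pow] at h3
  omega

open Polynomial in
lemma truncU_decomp {k : Type*} [Field k] (e : ℕ) {a : TruncPoly k e} (ha : a ≠ 0) :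
    ∃ i < e, ∃ w : (TruncPoly k e)ˣ, a = (truncU k e) ^ i * w := by
  obtain ⟨p, rfl⟩ := Ideal.Quotient.mk_surjective a
  have hp : p ≠ 0 := by rintro rfl; simp at ha
  obtain ⟨n, q, hq, hpq⟩ := WfDvdMonoid.max_power_factor hp irreducible_X
  have hn : n < e := by
    by_contra h
    push_neg at h
    apply ha
    rw [Ideal.Quotient.eq_zero_iff_mem, Ideal.mem_span_singleton, hpq]
    exact Dvd.dvd.mul_right (pow_dvd_pow _ h) q
  have hq0 : q.coeff 0 ≠ 0 := fun h => hq (X_dvd_iff.mpr h)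
  have hunit : IsUnit (Ideal.Quotient.mk (Ideal.span {(X : k[X]) ^ e}) q) := by
    have hq' : (Ideal.Quotient.mk (Ideal.span {(X : k[X]) ^ e})) q
        = Ideal.Quotient.mk _ (q.divX * X) + Ideal.Quotient.mk _ (C (q.coeff 0)) := by
      rw [← map_add, divX_mul_X_add]
    rw [hq']
    refine IsNilpotent.isUnit_add_right_of_commute ?_ ?_ (Commute.all _ _)
    · refine ⟨e, ?_⟩
      rw [← map_pow, Ideal.Quotient.eq_zero_iff_mem, Ideal.mem_span_singleton, mul_pow]
      exact Dvd.dvd.mul_left dvd_rfl _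
    · exact (isUnit_C.mpr (isUnit_iff_ne_zero.mpr hq0)).map _
  exact ⟨n, hn, hunit.unit, by rw [hpq, map_mul, map_pow, hunit.unit_spec]⟩

/-- For a Pappas–Rapoport filtration `0 = ω⁰ ⊆ ω¹ ⊆ ⋯ ⊆ ω^e` (with one-dimensional
graded pieces and `u·ω^j ⊆ ω^{j-1}`) inside a free rank-2 module over `k[u]/(u^e)`,
the following are equivalent: (1) all the maps induced by `u` on successive graded
pieces are nonzero; (2) `ω^e` is free of rank one over `k[u]/(u^e)`. -/
theorem stmt9 {k : Type*} [Field k] (e : ℕ) (he : 1 ≤ e)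
    {E : Type*} [AddCommGroup E] [Module (TruncPoly k e) E]
    (b : Module.Basis (Fin 2) (TruncPoly k e) E)
    (ω : ℕ → Submodule (TruncPoly k e) E)
    (h0 : ω 0 = ⊥)
    (hcov : ∀ j, 1 ≤ j → j ≤ e → ω (j - 1) ⋖ ω j)
    (hu : ∀ j, 1 ≤ j → j ≤ e → ∀ x ∈ ω j, truncU k e • x ∈ ω (j - 1)) :
    (∀ j, 2 ≤ j → j ≤ e → ∃ x ∈ ω j, truncU k e • x ∉ ω (j - 2)) ↔
      ∃ v ∈ ω e, Submodule.span (TruncPoly k e) {v} = ω e ∧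
        ∀ a : TruncPoly k e, a • v = 0 → a = 0 := by
  -- general fact: `u^i` sends `ω m` into `ω (m - i)`
  have pow_mem : ∀ i m, m ≤ e → ∀ x ∈ ω m, (truncU k e) ^ i • x ∈ ω (m - i) := by
    intro i
    induction i with
    | zero => intro m hm x hx; simpa using hx
    | succ i ih =>
      intro m hm x hx
      have h1 : (truncU k e) ^ i • x ∈ ω (m - i) := ih m hm x hx
      rcases Nat.eq_zero_or_pos (m - i) with h | h
      · have hz : (truncU k e) ^ (i + 1) • x = 0 := by
          rw [pow_succ', mul_smul]
          rw [h, h0, Submodule.mem_bot] at h1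
          rw [h1, smul_zero]
        rw [hz]
        exact Submodule.zero_mem _
      · have h2 := hu (m - i) h (le_trans (Nat.sub_le m i) hm) _ h1
        rw [pow_succ', mul_smul]
        simpa [Nat.sub_sub] using h2
  -- cover + a new element gives the sup
  have sup_of : ∀ (j : ℕ) (w : E), 1 ≤ j → j ≤ e → w ∈ ω j → w ∉ ω (j - 1) →
      ω (j - 1) ⊔ Submodule.span (TruncPoly k e) {w} = ω j := by
    intro j w hj1 hje hw hw'
    have hcover := hcov j hj1 hje
    rcases hcover.eq_or_eq (c := ω (j - 1) ⊔ Submodule.span (TruncPoly k e) {w}) le_sup_left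
        (sup_le hcover.lt.le
          (Submodule.span_le.mpr (Set.singleton_subset_iff.mpr hw))) with h | h
    · exfalso
      have : w ∈ ω (j - 1) ⊔ Submodule.span (TruncPoly k e) {w} :=
        Submodule.mem_sup_right (Submodule.mem_span_singleton_self w)
      rw [h] at this
      exact hw' this
    · exact h
  constructor
  · intro h1
    obtain ⟨v, hv_e, hv_ne⟩ := SetLike.exists_of_lt (hcov e he le_rfl).lt
    -- key downward claim
    have key : ∀ d, d + 1 ≤ e → (truncU k e) ^ d • v ∉ ω (e - d - 1) := by
      intro d
      induction d with
      | zero => intro _; simpa using hv_ne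
      | succ d ih =>
        intro hd
        have hd' : d + 1 ≤ e := by omega
        have hmem : (truncU k e) ^ d • v ∈ ω (e - d) := by
          simpa using pow_mem d e le_rfl v hv_e
        have hnot : (truncU k e) ^ d • v ∉ ω (e - d - 1) := ih hd'
        have hj2 : 2 ≤ e - d := by omega
        have hje : e - d ≤ e := by omega
        have hsup := sup_of (e - d) ((truncU k e) ^ d • v) (by omega) hje hmem hnot
        obtain ⟨x, hx, hux⟩ := h1 (e - d) hj2 hje
        rw [← hsup] at hx
        obtain ⟨y, hy, z, hz, rfl⟩ := Submodule.mem_sup.mp hx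
        obtain ⟨a, rfl⟩ := Submodule.mem_span_singleton.mp hz
        intro hcontra
        apply hux
        rw [smul_add]
        refine Submodule.add_mem _ ?_ ?_
        · have h2 := hu (e - d - 1) (by omega) (by omega) y hy
          simpa [show e - d - 1 - 1 = e - d - 2 from by omega] using h2
        · have heq : truncU k e • a • (truncU k e) ^ d • v
              = a • ((truncU k e) ^ (d + 1) • v) := by
            rw [pow_succ', mul_smul, ← mul_smul, mul_comm, mul_smul]
          rw [heq]
          refine Submodule.smul_mem _ a ?_
          have : e - (d + 1) - 1 = e - d - 2 := by omega
          rw [this] at hcontra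
          exact hcontra
    -- upward span claim
    have span_claim : ∀ m, m ≤ e →
        Submodule.span (TruncPoly k e) {(truncU k e) ^ (e - m) • v} = ω m := by
      intro m
      induction m with
      | zero =>
        intro _
        have hz : (truncU k e) ^ (e - 0) • v = 0 := by
          rw [Nat.sub_zero, truncU_pow_eq_zero]; exact zero_smul (TruncPoly k e) v
        rw [hz, h0, Submodule.span_zero_singleton]
      | succ m ih =>
        intro hm
        have hm' : m ≤ e := by omega
        have hmem : (truncU k e) ^ (e - (m + 1)) • v ∈ ω (m + 1) := by
          have := pow_mem (e - (m + 1)) e le_rfl v hv_e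
          simpa [show e - (e - (m + 1)) = m + 1 from by omega] using this
        have hnot : (truncU k e) ^ (e - (m + 1)) • v ∉ ω m := by
          have := key (e - (m + 1)) (by omega)
          simpa [show e - (e - (m + 1)) - 1 = m from by omega] using this
        have hsup := sup_of (m + 1) ((truncU k e) ^ (e - (m + 1)) • v) (by omega) hm hmem
          (by simpa using hnot)
        rw [show (m + 1) - 1 = m from rfl] at hsup
        rw [← hsup, ← ih hm']
        refine (sup_eq_right.mpr ?_).symm
        rw [Submodule.span_le, Set.singleton_subset_iff, SetLike.mem_coe,
          Submodule.mem_span_singleton]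
        refine ⟨truncU k e, ?_⟩
        rw [← mul_smul, ← pow_succ']
        congr 2
        omega
    refine ⟨v, hv_e, ?_, ?_⟩
    · have := span_claim e le_rfl
      simpa using this
    · intro a hav
      by_contra ha
      obtain ⟨i, hi, w, rfl⟩ := truncU_decomp e ha
      have hzero : (truncU k e) ^ i • v = 0 := by
        calc (truncU k e) ^ i • v
            = (((w⁻¹ : (TruncPoly k e)ˣ) : TruncPoly k e)
                * ((truncU k e) ^ i * (w : TruncPoly k e))) • v := by
              congr 1
              rw [mul_comm ((truncU k e) ^ i), ← mul_assoc, Units.inv_mul, one_mul]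
          _ = ((w⁻¹ : (TruncPoly k e)ˣ) : TruncPoly k e)
                • (((truncU k e) ^ i * (w : TruncPoly k e)) • v) := by rw [mul_smul]
          _ = 0 := by rw [hav, smul_zero]
      exact key i (by omega) (hzero ▸ Submodule.zero_mem _)
  · rintro ⟨v, hv, hspan, hfree⟩ j hj2 hje
    refine ⟨(truncU k e) ^ (e - j) • v, ?_, ?_⟩
    · have := pow_mem (e - j) e le_rfl v hv
      simpa [show e - (e - j) = j from by omega] using this
    · intro hcontra
      have h1 : (truncU k e) ^ (e - j + 1) • v ∈ ω (j - 2) := by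
        rw [pow_succ', mul_smul]
        exact hcontra
      have h2 := pow_mem (j - 2) (j - 2) (by omega) _ h1
      rw [Nat.sub_self, h0, Submodule.mem_bot] at h2
      have h3 : (truncU k e) ^ (e - 1) • v = 0 := by
        rw [show e - 1 = (j - 2) + (e - j + 1) from by omega, pow_add, mul_smul, h2]
      exact truncU_pow_ne_zero e (by omega : e - 1 < e) (hfree _ h3)
end

section
/- Let k be a field and ℰ a free module of rank 2 over k[u]/(u⁴). Let 0 = ω^{(0)} ⊆ ⋯ ⊆ ω^{(4)} be a chain of submodules with dim_k(ω^{(j)}/ω^{(j−1)}) = 1 and u·ω^{(j)} ⊆ ω^{(j−1)}. Assume u·ω^{(2)} = 0 (so ω^{(2)} = ℰ[u]) and assume the map induced by u from ω^{(4)}/ω^{(3)} to ω^{(3)}/ω^{(2)} is nonzero. Then for any v ∈ ω^{(4)} \ ω^{(3)} one has u²·v ≠ 0; in particular ω^{(4)} ≠ ℰ[u²] and the Hodge invariant of ω^{(4)} is (3, 1). -/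
set_option maxHeartbeats 2000000

namespace Aux13

open Polynomial

variable {k : Type*} [Field k]

local notation "R" => TruncPoly k 4
local notation "𝕦" => truncU k 4


noncomputable def pb4 : PowerBasis k (TruncPoly k 4) :=
  AdjoinRoot.powerBasis (f := (X : k[X])^4) (pow_ne_zero _ X_ne_zero)

lemma pb4_dim : (pb4 : PowerBasis k (TruncPoly k 4)).dim = 4 := by
  simp [pb4, AdjoinRoot.powerBasis]

lemma pb4_gen : (pb4 : PowerBasis k (TruncPoly k 4)).gen = 𝕦 := by
  rw [pb4, AdjoinRoot.powerBasis_gen]; rfl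

noncomputable def B4 : Module.Basis (Fin 4) k R := pb4.basis.reindex (finCongr pb4_dim)

lemma B4_apply (i : Fin 4) : (B4 : Module.Basis (Fin 4) k R) i = 𝕦 ^ (i : ℕ) := by
  rw [B4, Module.Basis.reindex_apply, PowerBasis.coe_basis, pb4_gen]
  simp

lemma u4 : (𝕦 : R) ^ 4 = 0 := by
  rw [show ((𝕦:R)^4) = Ideal.Quotient.mk _ ((X:k[X])^4) by rw [map_pow]]
  exact Ideal.Quotient.eq_zero_iff_mem.2 (Ideal.subset_span rfl)

lemma trunc_repr (r : R) :
    ∃ α₀ α₁ α₂ α₃ : k, r = α₀ • 1 + α₁ • 𝕦 + α₂ • (𝕦:R)^2 + α₃ • (𝕦:R)^3 := by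
  refine ⟨B4.repr r 0, B4.repr r 1, B4.repr r 2, B4.repr r 3, ?_⟩
  conv_lhs => rw [← B4.sum_repr r]
  rw [Fin.sum_univ_four, B4_apply, B4_apply, B4_apply, B4_apply]
  norm_num

lemma trunc_indep {α₀ α₁ α₂ α₃ : k}
    (h : α₀ • 1 + α₁ • 𝕦 + α₂ • (𝕦:R)^2 + α₃ • (𝕦:R)^3 = 0) :
    α₀ = 0 ∧ α₁ = 0 ∧ α₂ = 0 ∧ α₃ = 0 := by
  have h2 : ∑ i : Fin 4, ![α₀, α₁, α₂, α₃] i • (B4 : Module.Basis (Fin 4) k R) i = 0 := by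
    rw [Fin.sum_univ_four, B4_apply, B4_apply, B4_apply, B4_apply, ← h]
    norm_num
    rfl
  have := Fintype.linearIndependent_iff.1 B4.linearIndependent _ h2
  exact ⟨by simpa using this 0, by simpa using this 1, by simpa using this 2,
    by simpa using this 3⟩

lemma u_ne_zero : (𝕦 : R) ≠ 0 := by
  intro h
  have : (0:k) • (1:R) + (1:k) • 𝕦 + (0:k) • (𝕦:R)^2 + (0:k) • (𝕦:R)^3 = 0 := by
    rw [h]; simp
  exact one_ne_zero (trunc_indep this).2.1

lemma u3_ne_zero : (𝕦 : R) ^ 3 ≠ 0 := by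
  intro h
  have : (0:k) • (1:R) + (0:k) • 𝕦 + (0:k) • (𝕦:R)^2 + (1:k) • (𝕦:R)^3 = 0 := by
    rw [h]; simp
  exact one_ne_zero (trunc_indep this).2.2.2

lemma u_mul_eq_zero {a : R} (h : 𝕦 * a = 0) : ∃ α : k, a = α • (𝕦:R) ^ 3 := by
  obtain ⟨α₀, α₁, α₂, α₃, rfl⟩ := trunc_repr (k := k) a
  refine ⟨α₃, ?_⟩
  have key : (0:k) • (1:R) + α₀ • 𝕦 + α₁ • (𝕦:R)^2 + α₂ • (𝕦:R)^3 = 0 := by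
    rw [← h]
    simp only [mul_add, mul_smul_comm, mul_one]
    rw [show (𝕦:R) * 𝕦 = 𝕦^2 by ring, show (𝕦:R) * 𝕦^2 = 𝕦^3 by ring,
      show (𝕦:R) * 𝕦^3 = 𝕦^4 by ring, u4]
    simp
  obtain ⟨-, h1, h2, h3⟩ := trunc_indep key
  rw [h1, h2, h3]
  simp

lemma trunc_split (r : R) : ∃ (c : k) (s : R), r = c • 1 + 𝕦 * s := by
  obtain ⟨α₀, α₁, α₂, α₃, rfl⟩ := trunc_repr (k := k) r
  refine ⟨α₀, α₁ • 1 + α₂ • 𝕦 + α₃ • (𝕦:R)^2, ?_⟩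
  simp only [mul_add, mul_smul_comm, mul_one]
  rw [show (𝕦:R) * 𝕦 = 𝕦^2 by ring, show (𝕦:R) * 𝕦^2 = 𝕦^3 by ring]
  abel

section Mod
variable {E : Type*} [AddCommGroup E] [Module (TruncPoly k 4) E] [Module k E]
  [IsScalarTower k (TruncPoly k 4) E]

example : SMulCommClass k R E := by infer_instance

lemma fd (b : Module.Basis (Fin 2) R E) : FiniteDimensional k E :=
  Module.Finite.of_basis ((B4 : Module.Basis (Fin 4) k R).smulTower b)

lemma mem_tor (b : Module.Basis (Fin 2) R E) {x : E} (h : 𝕦 • x = 0) :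
    x ∈ Submodule.span k {(𝕦:R)^3 • b 0, (𝕦:R)^3 • b 1} := by
  have hx := b.sum_repr x
  rw [Fin.sum_univ_two] at hx
  set a := b.repr x 0 with ha
  set c := b.repr x 1 with hc
  have h2 : (𝕦 * a) • b 0 + (𝕦 * c) • b 1 = 0 := by
    rw [mul_smul, mul_smul, ← smul_add, hx, h]
  have h3 : ∀ i : Fin 2, (![𝕦 * a, 𝕦 * c] i) = 0 := by
    apply Fintype.linearIndependent_iff.1 b.linearIndependent
    rw [Fin.sum_univ_two]
    simpa only [Matrix.cons_val_zero, Matrix.cons_val_one, Matrix.head_cons] using h2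
  obtain ⟨α, hα⟩ := u_mul_eq_zero (by simpa only [Matrix.cons_val_zero] using h3 0)
  obtain ⟨γ, hγ⟩ := u_mul_eq_zero
    (by simpa only [Matrix.cons_val_one, Matrix.head_cons, Matrix.cons_val_zero] using h3 1)
  rw [← hx, hα, hγ, smul_assoc, smul_assoc]
  exact Submodule.add_mem _
    (Submodule.smul_mem _ _ (Submodule.subset_span (by simp)))
    (Submodule.smul_mem _ _ (Submodule.subset_span (by simp)))

lemma tor_rank_le (b : Module.Basis (Fin 2) R E) [FiniteDimensional k E] :
    Module.finrank k (Submodule.span k {(𝕦:R)^3 • b 0, (𝕦:R)^3 • b 1}) ≤ 2 := by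
  classical
  refine le_trans (finrank_span_le_card _) ?_
  rw [Set.toFinset_insert, Set.toFinset_singleton]
  exact (Finset.card_insert_le _ _).trans (by simp)

lemma step {W W' : Submodule R E} (hc : W ⋖ W') (hWu : ∀ y ∈ W', 𝕦 • y ∈ W)
    {x : E} (hx : x ∈ W') (hx' : x ∉ W) :
    W'.restrictScalars k = W.restrictScalars k ⊔ Submodule.span k {x} := by
  have hsup : W ⊔ Submodule.span R {x} = W' := by
    rcases hc.eq_or_eq le_sup_left
      (sup_le hc.lt.le (Submodule.span_le.2 (Set.singleton_subset_iff.2 hx))) with h | h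
    · exact absurd (h ▸ (le_sup_right : Submodule.span R {x} ≤ W ⊔ Submodule.span R {x}))
        (fun hle => hx' (hle (Submodule.mem_span_singleton_self x)))
    · exact h
  apply le_antisymm
  · intro y hy
    have hy' : y ∈ W ⊔ Submodule.span R {x} := hsup ▸ hy
    obtain ⟨w, hw, z, hz, rfl⟩ := Submodule.mem_sup.1 hy'
    obtain ⟨r, rfl⟩ := Submodule.mem_span_singleton.1 hz
    obtain ⟨c, s, rfl⟩ := trunc_split r
    have heq : w + (c • (1:R) + 𝕦 * s) • x
        = (w + s • (𝕦 • x)) + c • x := by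
      rw [add_smul, smul_assoc, one_smul, mul_comm, mul_smul]
      abel
    rw [heq]
    exact Submodule.add_mem _
      (Submodule.mem_sup_left (Submodule.add_mem _ hw
        (Submodule.smul_mem _ _ (hWu x hx))))
      (Submodule.mem_sup_right (Submodule.smul_mem _ _
        (Submodule.subset_span rfl)))
  · exact sup_le (fun y hy => hc.lt.le hy)
      (Submodule.span_le.2 (Set.singleton_subset_iff.2 hx))

lemma finrank_step [FiniteDimensional k E] {W : Submodule k E} {x : E} (hx : x ∉ W) :
    Module.finrank k ↥(W ⊔ Submodule.span k {x}) = Module.finrank k W + 1 := by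
  have hxne : x ≠ 0 := fun h => hx (h ▸ W.zero_mem)
  have hinf : W ⊓ Submodule.span k {x} = ⊥ := by
    rw [eq_bot_iff]
    rintro z ⟨hzW, hzs⟩
    obtain ⟨r, rfl⟩ := Submodule.mem_span_singleton.1 hzs
    rcases eq_or_ne r 0 with rfl | hr
    · simp
    · refine absurd ?_ hx
      have := W.smul_mem r⁻¹ hzW
      rwa [inv_smul_smul₀ hr] at this
  have := Submodule.finrank_sup_add_finrank_inf_eq W (Submodule.span k {x})
  rw [hinf, finrank_span_singleton hxne] at this
  simpa using this

theorem main (b : Module.Basis (Fin 2) R E)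
    (ω : ℕ → Submodule R E)
    (h0 : ω 0 = ⊥)
    (hcov : ∀ j, 1 ≤ j → j ≤ 4 → ω (j - 1) ⋖ ω j)
    (hu : ∀ j, 1 ≤ j → j ≤ 4 → ∀ x ∈ ω j, 𝕦 • x ∈ ω (j - 1))
    (hm2 : ∀ x ∈ ω 2, 𝕦 • x = 0)
    (hm4 : ∃ x ∈ ω 4, 𝕦 • x ∉ ω 2) :
    (∀ v ∈ ω 4, v ∉ ω 3 → ((𝕦:R) ^ 2) • v ≠ 0) ∧
    ω 4 ≠ Submodule.torsionBy R E ((𝕦:R) ^ 2) ∧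
    ∃ v w : E, v ∈ ω 4 ∧ w ∈ ω 4 ∧
      ω 4 = Submodule.span R {v, w} ∧
      ∀ a c : R,
        (a • v + c • w = 0 ↔
          a ∈ Ideal.span {(𝕦:R) ^ 3} ∧ c ∈ Ideal.span {(𝕦:R)}) := by
  classical
  haveI : FiniteDimensional k E := fd b
  -- named cover/smul facts
  have hc1 : ω 0 ⋖ ω 1 := hcov 1 le_rfl (by norm_num)
  have hc2 : ω 1 ⋖ ω 2 := hcov 2 (by norm_num) (by norm_num)
  have hc3 : ω 2 ⋖ ω 3 := hcov 3 (by norm_num) (by norm_num)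
  have hc4 : ω 3 ⋖ ω 4 := hcov 4 (by norm_num) le_rfl
  have hu2 : ∀ x ∈ ω 2, 𝕦 • x ∈ ω 1 := fun x hx => hu 2 (by norm_num) (by norm_num) x hx
  have hu3 : ∀ x ∈ ω 3, 𝕦 • x ∈ ω 2 := fun x hx => hu 3 (by norm_num) (by norm_num) x hx
  have hu4 : ∀ x ∈ ω 4, 𝕦 • x ∈ ω 3 := fun x hx => hu 4 (by norm_num) le_rfl x hx
  -- the element x from hm4
  obtain ⟨x, hx4, hxu⟩ := hm4
  have hx3 : x ∉ ω 3 := fun h => hxu (hu3 x h)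
  -- restrictScalars
  set W1 := (ω 1).restrictScalars k with hW1def
  set W2 := (ω 2).restrictScalars k with hW2def
  set W3 := (ω 3).restrictScalars k with hW3def
  set W4 := (ω 4).restrictScalars k with hW4def
  -- elements realizing covers
  obtain ⟨x1, hx1, hx1'⟩ := SetLike.exists_of_lt hc1.lt
  obtain ⟨x2, hx2, hx2'⟩ := SetLike.exists_of_lt hc2.lt
  obtain ⟨x3, hx3', hx3''⟩ := SetLike.exists_of_lt hc3.lt
  have hu1 : ∀ y ∈ ω 1, 𝕦 • y ∈ ω 0 := fun y hy => hu 1 le_rfl (by norm_num) y hy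
  have e1 : W1 = (ω 0).restrictScalars k ⊔ Submodule.span k {x1} := step hc1 hu1 hx1 hx1'
  have e2 : W2 = W1 ⊔ Submodule.span k {x2} := step hc2 hu2 hx2 hx2'
  have e3 : W3 = W2 ⊔ Submodule.span k {x3} := step hc3 hu3 hx3' hx3''
  have e4 : W4 = W3 ⊔ Submodule.span k {x} := step hc4 hu4 hx4 hx3
  have rk0 : Module.finrank k ((ω 0).restrictScalars k) = 0 := by
    rw [h0]; exact finrank_bot k E
  have rk1 : Module.finrank k W1 = 1 := by
    rw [e1, finrank_step (by rw [h0] at hx1' ⊢; simpa using hx1'), rk0]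
  have rk2 : Module.finrank k W2 = 2 := by
    rw [e2, finrank_step hx2', rk1]
  have rk3 : Module.finrank k W3 = 3 := by
    rw [e3, finrank_step hx3'', rk2]
  have rk4 : Module.finrank k W4 = 4 := by
    rw [e4, finrank_step hx3, rk3]
  -- claim: 𝕦•v ∉ ω 2 for v ∈ ω4 \ ω3
  have key1 : ∀ v ∈ ω 4, v ∉ ω 3 → 𝕦 • v ∉ ω 2 := by
    intro v hv hv' hmem
    have hvW : v ∈ W3 ⊔ Submodule.span k {x} := by rw [← e4]; exact hv
    obtain ⟨z, hz, y, hy, rfl⟩ := Submodule.mem_sup.1 hvW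
    obtain ⟨γ, rfl⟩ := Submodule.mem_span_singleton.1 hy
    have hγ : γ ≠ 0 := by
      rintro rfl
      exact hv' (by simpa [hW3def] using hz)
    have h1 : 𝕦 • (z + γ • x) = 𝕦 • z + γ • (𝕦 • x) := by
      rw [smul_add, smul_comm]
    have h2 : γ • (𝕦 • x) ∈ W2 := by
      have hz2 : 𝕦 • z ∈ W2 := hu3 z hz
      have : 𝕦 • (z + γ • x) - 𝕦 • z ∈ W2 := Submodule.sub_mem _ hmem hz2
      rwa [h1, add_sub_cancel_left] at this
    have : 𝕦 • x ∈ W2 := by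
      have := W2.smul_mem γ⁻¹ h2
      rwa [inv_smul_smul₀ hγ] at this
    exact hxu this
  -- claim 1
  have claim1 : ∀ v ∈ ω 4, v ∉ ω 3 → ((𝕦:R) ^ 2) • v ≠ 0 := by
    intro v hv hv' hzero
    have huuv : 𝕦 • (𝕦 • v) = 0 := by
      rw [← mul_smul, ← pow_two]; exact hzero
    have htv3 : 𝕦 • v ∈ ω 3 := hu4 v hv
    have htv2 : 𝕦 • v ∉ ω 2 := key1 v hv hv'
    have e3' : W3 = W2 ⊔ Submodule.span k {𝕦 • v} := step hc3 hu3 htv3 htv2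
    set T := Submodule.span k {(𝕦:R)^3 • b 0, (𝕦:R)^3 • b 1} with hT
    have hled : W3 ≤ T := by
      rw [e3']
      refine sup_le (fun z hz => mem_tor b (hm2 z hz)) ?_
      rw [Submodule.span_le, Set.singleton_subset_iff]
      exact mem_tor b huuv
    have : (3:ℕ) ≤ 2 := by
      calc (3:ℕ) = Module.finrank k W3 := rk3.symm
      _ ≤ Module.finrank k T := Submodule.finrank_mono hled
      _ ≤ 2 := tor_rank_le b
    omega
  refine ⟨claim1, ?_, ?_⟩
  · -- claim 2
    obtain ⟨v, hv4, hv3⟩ := SetLike.exists_of_lt hc4.lt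
    intro heq
    exact claim1 v hv4 hv3 ((Submodule.mem_torsionBy_iff _ _).1 (heq ▸ hv4))
  · -- claim 3
    obtain ⟨v, hv4, hv3⟩ := SetLike.exists_of_lt hc4.lt
    have huv3 : 𝕦 • v ∈ ω 3 := hu4 v hv4
    have huv2 : 𝕦 • v ∉ ω 2 := key1 v hv4 hv3
    have hu2v : ((𝕦:R)^2) • v ∈ ω 2 := by
      rw [pow_two, mul_smul]; exact hu3 _ huv3
    have hu2vne : ((𝕦:R)^2) • v ≠ 0 := claim1 v hv4 hv3
    have hu3v : ((𝕦:R)^3) • v = 0 := by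
      rw [show ((𝕦:R)^3) = 𝕦 * 𝕦^2 by ring, mul_smul]
      exact hm2 _ hu2v
    -- choose w
    have hnle : ¬ W2 ≤ Submodule.span k {((𝕦:R)^2) • v} := by
      intro hle
      have := Submodule.finrank_mono hle
      rw [rk2, finrank_span_singleton hu2vne] at this
      omega
    obtain ⟨w, hw2, hwsp⟩ := SetLike.not_le_iff_exists.1 hnle
    have hw2' : w ∈ ω 2 := hw2
    have huw : 𝕦 • w = 0 := hm2 w hw2'
    have hw3 : w ∈ ω 3 := hc3.lt.le hw2'
    have hw4 : w ∈ ω 4 := hc4.lt.le hw3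
    -- linear independence
    have LI : ∀ α β γ δ : k,
        α • v + β • (𝕦 • v) + γ • (((𝕦:R)^2) • v) + δ • w = 0 →
        α = 0 ∧ β = 0 ∧ γ = 0 ∧ δ = 0 := by
      intro α β γ δ hrel
      have hα : α = 0 := by
        by_contra hα
        have heq0 : α • v + (β • (𝕦 • v) + γ • (((𝕦:R)^2) • v) + δ • w) = 0 := by
          rw [← hrel]; abel
        have hmem3 : α • v ∈ W3 := by
          rw [eq_neg_of_add_eq_zero_left heq0]
          exact Submodule.neg_mem _ (Submodule.add_mem _ (Submodule.add_mem _
            (Submodule.smul_mem _ _ huv3)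
            (Submodule.smul_mem _ _ (hc3.lt.le hu2v)))
            (Submodule.smul_mem _ _ hw3))
        have : v ∈ W3 := by
          have := W3.smul_mem α⁻¹ hmem3
          rwa [inv_smul_smul₀ hα] at this
        exact hv3 this
      subst hα
      rw [zero_smul, zero_add] at hrel
      have hβ : β = 0 := by
        by_contra hβ
        have heq0 : β • (𝕦 • v) + (γ • (((𝕦:R)^2) • v) + δ • w) = 0 := by
          rw [← hrel]; abel
        have hmem2 : β • (𝕦 • v) ∈ W2 := by
          rw [eq_neg_of_add_eq_zero_left heq0]
          exact Submodule.neg_mem _ (Submodule.add_mem _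
            (Submodule.smul_mem _ _ hu2v) (Submodule.smul_mem _ _ hw2'))
        have : 𝕦 • v ∈ W2 := by
          have := W2.smul_mem β⁻¹ hmem2
          rwa [inv_smul_smul₀ hβ] at this
        exact huv2 this
      subst hβ
      rw [zero_smul, zero_add] at hrel
      have hrel' : γ • (((𝕦:R)^2) • v) + δ • w = 0 := hrel
      have hδ : δ = 0 := by
        by_contra hδ
        have h1 : δ • w = -(γ • (((𝕦:R)^2) • v)) := eq_neg_of_add_eq_zero_left (by rw [add_comm]; exact hrel')
        refine hwsp ?_
        have h2 : w = δ⁻¹ • (δ • w) := (inv_smul_smul₀ hδ w).symm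
        rw [h2, h1]
        exact Submodule.smul_mem _ _ (Submodule.neg_mem _
          (Submodule.smul_mem _ _ (Submodule.mem_span_singleton_self _)))
      subst hδ
      have hγ : γ = 0 := by
        rw [zero_smul, add_zero] at hrel'
        exact (smul_eq_zero.1 hrel').resolve_right hu2vne
      exact ⟨rfl, rfl, hγ, rfl⟩
    -- now v, w generate ω 4
    refine ⟨v, w, hv4, hw4, ?_, ?_⟩
    · -- span equality
      set S := Submodule.span R {v, w} with hS
      have hle : S ≤ ω 4 := Submodule.span_le.2 (by
        rintro y (rfl | rfl)
        exacts [hv4, hw4])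
      have hfli : LinearIndependent k ![v, 𝕦 • v, ((𝕦:R)^2) • v, w] := by
        rw [Fintype.linearIndependent_iff]
        intro g hg
        rw [Fin.sum_univ_four] at hg
        have hg' : g 0 • v + g 1 • (𝕦 • v) + g 2 • (((𝕦:R)^2) • v) + g 3 • w = 0 := hg
        obtain ⟨h1, h2, h3, h4⟩ := LI _ _ _ _ hg'
        intro i
        fin_cases i <;> assumption
      have hrange : Submodule.span k (Set.range ![v, 𝕦 • v, ((𝕦:R)^2) • v, w])
          ≤ S.restrictScalars k := by
        rw [Submodule.span_le]
        rintro y ⟨i, rfl⟩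
        have hvS : v ∈ S := Submodule.subset_span (by simp)
        have hwS : w ∈ S := Submodule.subset_span (by simp)
        fin_cases i
        · exact hvS
        · exact S.smul_mem _ hvS
        · exact S.smul_mem _ hvS
        · exact hwS
      have hrk : Module.finrank k
          (Submodule.span k (Set.range ![v, 𝕦 • v, ((𝕦:R)^2) • v, w])) = 4 := by
        rw [finrank_span_eq_card hfli]
        simp
      have hSle : S.restrictScalars k ≤ W4 := fun y hy => hle hy
      have hrkS : Module.finrank k (S.restrictScalars k) = 4 := by
        have h1 := Submodule.finrank_mono (t := S.restrictScalars k) hrange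
        have h2 := Submodule.finrank_mono hSle
        rw [hrk] at h1
        rw [rk4] at h2
        omega
      have : S.restrictScalars k = W4 :=
        Submodule.eq_of_le_of_finrank_eq hSle (by rw [hrkS, rk4])
      exact (Submodule.restrictScalars_injective k R E this).symm
    · -- the relations
      intro a c
      constructor
      · intro hrel
        obtain ⟨α₀, α₁, α₂, α₃, rfl⟩ := trunc_repr (k := k) a
        obtain ⟨γ₀, γ₁, γ₂, γ₃, rfl⟩ := trunc_repr (k := k) c
        have hexp : α₀ • v + α₁ • (𝕦 • v) + α₂ • (((𝕦:R)^2) • v) + γ₀ • w = 0 := by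
          rw [← hrel]
          have hav : (α₀ • 1 + α₁ • 𝕦 + α₂ • (𝕦:R)^2 + α₃ • (𝕦:R)^3) • v
              = α₀ • v + α₁ • (𝕦 • v) + α₂ • (((𝕦:R)^2) • v) := by
            rw [add_smul, add_smul, add_smul, smul_assoc, one_smul,
              smul_assoc, smul_assoc, smul_assoc, hu3v, smul_zero, add_zero]
          have hu2w : ((𝕦:R)^2) • w = 0 := by
            rw [pow_two, mul_smul, huw, smul_zero]
          have hu3w : ((𝕦:R)^3) • w = 0 := by
            rw [show ((𝕦:R)^3) = 𝕦 * 𝕦^2 by ring, mul_smul, hu2w, smul_zero]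
          have hcw : (γ₀ • 1 + γ₁ • 𝕦 + γ₂ • (𝕦:R)^2 + γ₃ • (𝕦:R)^3) • w = γ₀ • w := by
            rw [add_smul, add_smul, add_smul, smul_assoc, one_smul,
              smul_assoc, smul_assoc, smul_assoc, huw, hu2w, hu3w,
              smul_zero, smul_zero, smul_zero, add_zero, add_zero, add_zero]
          rw [hav, hcw]
        obtain ⟨h1, h2, h3, h4⟩ := LI _ _ _ _ hexp
        constructor
        · rw [Ideal.mem_span_singleton, h1, h2, h3]
          refine ⟨α₃ • 1, ?_⟩
          rw [mul_smul_comm, mul_one]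
          simp
        · rw [Ideal.mem_span_singleton, h4]
          refine ⟨γ₁ • 1 + γ₂ • 𝕦 + γ₃ • (𝕦:R)^2, ?_⟩
          rw [mul_add, mul_add, mul_smul_comm, mul_smul_comm, mul_smul_comm, mul_one]
          rw [show (𝕦:R) * 𝕦 = 𝕦^2 by ring, show (𝕦:R) * 𝕦^2 = 𝕦^3 by ring]
          simp
      · rintro ⟨ha, hc⟩
        obtain ⟨r, rfl⟩ := Ideal.mem_span_singleton.1 ha
        obtain ⟨s, rfl⟩ := Ideal.mem_span_singleton.1 hc
        rw [mul_comm ((𝕦:R)^3) r, mul_smul, hu3v, smul_zero,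
          mul_comm (𝕦:R) s, mul_smul, huw, smul_zero, add_zero]

end Mod

end Aux13

/-- For a Pappas–Rapoport filtration in a free rank-2 module over `k[u]/(u⁴)`, if
`u·ω² = 0` (so `ω² = ℰ[u]`) and the map `u : ω⁴/ω³ → ω³/ω²` is nonzero, then
`u²·v ≠ 0` for every `v ∈ ω⁴ \ ω³`; in particular `ω⁴ ≠ ℰ[u²]` and the Hodge
invariant of `ω⁴` is `(3, 1)`, i.e. `ω⁴ ≅ k[u]/(u³) ⊕ k[u]/(u)`. -/
theorem stmt13 {k : Type*} [Field k]
    {E : Type*} [AddCommGroup E] [Module (TruncPoly k 4) E]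
    (b : Module.Basis (Fin 2) (TruncPoly k 4) E)
    (ω : ℕ → Submodule (TruncPoly k 4) E)
    (h0 : ω 0 = ⊥)
    (hcov : ∀ j, 1 ≤ j → j ≤ 4 → ω (j - 1) ⋖ ω j)
    (hu : ∀ j, 1 ≤ j → j ≤ 4 → ∀ x ∈ ω j, truncU k 4 • x ∈ ω (j - 1))
    (hm2 : ∀ x ∈ ω 2, truncU k 4 • x = 0)
    (hm4 : ∃ x ∈ ω 4, truncU k 4 • x ∉ ω 2) :
    (∀ v ∈ ω 4, v ∉ ω 3 → (truncU k 4 ^ 2) • v ≠ 0) ∧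
    ω 4 ≠ Submodule.torsionBy (TruncPoly k 4) E (truncU k 4 ^ 2) ∧
    ∃ v w : E, v ∈ ω 4 ∧ w ∈ ω 4 ∧
      ω 4 = Submodule.span (TruncPoly k 4) {v, w} ∧
      ∀ a c : TruncPoly k 4,
        (a • v + c • w = 0 ↔
          a ∈ Ideal.span {truncU k 4 ^ 3} ∧ c ∈ Ideal.span {truncU k 4}) := by
  letI : Module k E := Module.compHom E (algebraMap k (TruncPoly k 4))
  have hsm : ∀ (c : k) (r : TruncPoly k 4), c • r = algebraMap k (TruncPoly k 4) c * r := by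
    intro c r
    obtain ⟨p, rfl⟩ := Ideal.Quotient.mk_surjective r
    rw [← Ideal.Quotient.mk_algebraMap]
    rw [show c • (Ideal.Quotient.mk _ p) = Ideal.Quotient.mk _ (c • p) from rfl]
    rw [← map_mul]
    congr 1
    rw [Algebra.smul_def]
  haveI : IsScalarTower k (TruncPoly k 4) E :=
    ⟨fun c r x => by rw [hsm, mul_smul]; rfl⟩
  exact Aux13.main b ω h0 hcov hu hm2 hm4
end
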